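/- Let p ≤ q ≤ p + 1 and q ≤ 1/2 − μ, suppose Q(y − y^δ) ∈ N_{2q}, (TT*)^q Q y ≠ 0, x† satisfies the source condition of order μ, and let α* be a minimizer of α ↦ ψ_HD(α, y^δ) over (0,‖T‖²). Then there exist constants C > 0 and η₀ > 0 such that ‖x_{α*}^δ − x†‖ ≤ C η^{(2μ/(2μ+2p+1))·(2μ/(1−2q))} whenever η ≤ η₀. -/

import Mathlib

open scoped BigOperators
open Set

noncomputable section

namespace WeakNoise

/-! ### Sequence (spectral/diagonal) model of the weakly bounded noise setting

Since `T : X → Y` is a compact linear operator, `T T*` and `T* T` have a common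
sequence of positive eigenvalues `lam i`, bounded by `Λ = ‖T‖²`, with
orthonormal eigenbases `u i` (of `T T*`, spanning `closure (range T)`) and
`v i` (of `T* T`, spanning `(ker T)ᗮ`).  We describe all data by their spectral
coefficients: `e i = ⟪y^δ - y, u i⟫` (so `y - y^δ` has coefficients `-e i`,
with the same squares), and `xdag i = ⟪x†, v i⟫` (note `x† ⟂ ker T`), so that
the exact data `y = T x†` has coefficients `√(lam i) * xdag i`.  All norms,
functionals and conditions of the paper are expressed through their spectral
representations `∫ w(λ) d‖F_λ z‖² = ∑' i, w (lam i) * (coefficient of z at i)²`. -/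

/-- squared weak noise level `η² = ‖(T T*)^p (y^δ - y)‖² = ∑ λᵢ^{2p} eᵢ²`. -/
def etaSq (lam e : ℕ → ℝ) (p : ℝ) : ℝ := ∑' i, lam i ^ (2 * p) * e i ^ 2

/-- weak noise level `η = ‖(T T*)^p (y^δ - y)‖`. -/
def eta (lam e : ℕ → ℝ) (p : ℝ) : ℝ := Real.sqrt (etaSq lam e p)

/-- `‖x_α^δ - x_α‖² = ∑ λᵢ eᵢ²/(λᵢ+α)²`. -/
def dataErrSq (lam e : ℕ → ℝ) (α : ℝ) : ℝ := ∑' i, lam i * e i ^ 2 / (lam i + α) ^ 2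

/-- `‖x_α^δ - x_α‖`. -/
def dataErr (lam e : ℕ → ℝ) (α : ℝ) : ℝ := Real.sqrt (dataErrSq lam e α)

/-- `‖x_α - x†‖² = ∑ α² xdagᵢ²/(λᵢ+α)²`. -/
def approxErrSq (lam xdag : ℕ → ℝ) (α : ℝ) : ℝ := ∑' i, α ^ 2 * xdag i ^ 2 / (lam i + α) ^ 2

/-- `‖x_α - x†‖`. -/
def approxErr (lam xdag : ℕ → ℝ) (α : ℝ) : ℝ := Real.sqrt (approxErrSq lam xdag α)

/-- `‖T (x_α^δ - x_α)‖² = ∑ λᵢ² eᵢ²/(λᵢ+α)²`. -/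
def TdataErrSq (lam e : ℕ → ℝ) (α : ℝ) : ℝ := ∑' i, lam i ^ 2 * e i ^ 2 / (lam i + α) ^ 2

/-- `‖T (x_α^δ - x_α)‖`. -/
def TdataErr (lam e : ℕ → ℝ) (α : ℝ) : ℝ := Real.sqrt (TdataErrSq lam e α)

/-- `‖T x_α - y‖² = ∑ α² λᵢ xdagᵢ²/(λᵢ+α)²`. -/
def TapproxErrSq (lam xdag : ℕ → ℝ) (α : ℝ) : ℝ :=
  ∑' i, α ^ 2 * lam i * xdag i ^ 2 / (lam i + α) ^ 2

/-- `‖T x_α - y‖`. -/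
def TapproxErr (lam xdag : ℕ → ℝ) (α : ℝ) : ℝ := Real.sqrt (TapproxErrSq lam xdag α)

/-- `‖x_α^δ - x†‖² = ∑ (√λᵢ eᵢ - α xdagᵢ)²/(λᵢ+α)²`. -/
def totalErrSq (lam xdag e : ℕ → ℝ) (α : ℝ) : ℝ :=
  ∑' i, (Real.sqrt (lam i) * e i - α * xdag i) ^ 2 / (lam i + α) ^ 2

/-- `‖x_α^δ - x†‖`. -/
def totalErr (lam xdag e : ℕ → ℝ) (α : ℝ) : ℝ := Real.sqrt (totalErrSq lam xdag e α)

/-- spectral coefficients of the exact data `y = T x†`. -/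
def yCoeff (lam xdag : ℕ → ℝ) : ℕ → ℝ := fun i => Real.sqrt (lam i) * xdag i

/-- spectral coefficients of the noisy data `y^δ`. -/
def ydCoeff (lam xdag e : ℕ → ℝ) : ℕ → ℝ := fun i => Real.sqrt (lam i) * xdag i + e i

/-- squared quasi-optimality functional `ψ_QO(α,z)² = ∑ α² λᵢ cᵢ²/(λᵢ+α)⁴`,
where `c` are the spectral coefficients of `z`. -/
def psiQOsq (lam c : ℕ → ℝ) (α : ℝ) : ℝ := ∑' i, α ^ 2 * lam i * c i ^ 2 / (lam i + α) ^ 4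

/-- quasi-optimality functional `ψ_QO(α,z)`. -/
def psiQO (lam c : ℕ → ℝ) (α : ℝ) : ℝ := Real.sqrt (psiQOsq lam c α)

/-- squared modified heuristic discrepancy functional
`ψ_HD(α,z)² = ∑ λᵢ^{2q} α^{1-2q} cᵢ²/(λᵢ+α)²`. -/
def psiHDsq (lam c : ℕ → ℝ) (q α : ℝ) : ℝ :=
  ∑' i, lam i ^ (2 * q) * α ^ (1 - 2 * q) * c i ^ 2 / (lam i + α) ^ 2

/-- modified heuristic discrepancy functional `ψ_HD(α,z)`. -/
def psiHD (lam c : ℕ → ℝ) (q α : ℝ) : ℝ := Real.sqrt (psiHDsq lam c q α)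

/-- squared modified Hanke-Raus functional
`ψ_HR(α,z)² = ∑ λᵢ^{2q} α^{2-2q} cᵢ²/(λᵢ+α)³`. -/
def psiHRsq (lam c : ℕ → ℝ) (q α : ℝ) : ℝ :=
  ∑' i, lam i ^ (2 * q) * α ^ (2 - 2 * q) * c i ^ 2 / (lam i + α) ^ 3

/-- modified Hanke-Raus functional `ψ_HR(α,z)`. -/
def psiHR (lam c : ℕ → ℝ) (q α : ℝ) : ℝ := Real.sqrt (psiHRsq lam c q α)

/-- squared predictive mean-square error functional
`ψ_PMS(α,y^δ)² = ‖T x_α^δ - y‖² = ∑ (λᵢ eᵢ - α √λᵢ xdagᵢ)²/(λᵢ+α)²`. -/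
def psiPMSsq (lam xdag e : ℕ → ℝ) (α : ℝ) : ℝ :=
  ∑' i, (lam i * e i - α * Real.sqrt (lam i) * xdag i) ^ 2 / (lam i + α) ^ 2

/-- predictive mean-square error functional `ψ_PMS(α,y^δ)`. -/
def psiPMS (lam xdag e : ℕ → ℝ) (α : ℝ) : ℝ := Real.sqrt (psiPMSsq lam xdag e α)

/-- the noise condition defining `N_ν`, with explicit constant `C`:
`α^{ν+1} ∫_α^{‖T‖²} λ⁻¹ d‖F_λ e‖² ≤ C ∫_0^α λ^ν d‖F_λ e‖²` for all `α ∈ (0,‖T‖²)`. -/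
def noiseCondC (lam c : ℕ → ℝ) (Λ ν C : ℝ) : Prop :=
  ∀ α ∈ Set.Ioo (0 : ℝ) Λ,
    α ^ (ν + 1) * ∑' i, (if α < lam i then c i ^ 2 / lam i else 0)
      ≤ C * ∑' i, (if lam i ≤ α then lam i ^ ν * c i ^ 2 else 0)

/-- membership in the noise class `N_ν`. -/
def memN (lam c : ℕ → ℝ) (Λ ν : ℝ) : Prop := ∃ C > 0, noiseCondC lam c Λ ν C

/-- the regularity condition on `x†`:
`α² ∫_α^∞ λ⁻² d‖E_λ x†‖² ≥ C ∫_0^α d‖E_λ x†‖²` for all `α ∈ (0,‖T‖²)`. -/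
def regCond (lam xdag : ℕ → ℝ) (Λ : ℝ) : Prop :=
  ∃ C > 0, ∀ α ∈ Set.Ioo (0 : ℝ) Λ,
    C * ∑' i, (if lam i ≤ α then xdag i ^ 2 else 0)
      ≤ α ^ 2 * ∑' i, (if α < lam i then xdag i ^ 2 / lam i ^ 2 else 0)

/-- the noise condition (regcon) with parameter `ε > 0` and explicit constant `C`:
`∫_α^{‖T‖²} d‖F_λ Q(y-y^δ)‖² ≥ C η²/α^{2p-ε}` for all `α ∈ (0,‖T‖²)`. -/
def regconC (lam e : ℕ → ℝ) (Λ p ε C : ℝ) : Prop :=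
  ∀ α ∈ Set.Ioo (0 : ℝ) Λ,
    C * etaSq lam e p / α ^ (2 * p - ε) ≤ ∑' i, (if α < lam i then e i ^ 2 else 0)

/-- condition (xxx) with parameter `ε₂ > 0` and explicit constant `C`:
`∫_α^{‖T‖²} λ^{2μ-1} d‖E_λ ω‖² ≥ C α^{2μ-1+ε₂}` for all `α ∈ (0,‖T‖²)`. -/
def xxxCondC (lam om : ℕ → ℝ) (Λ mu eps2 C : ℝ) : Prop :=
  ∀ α ∈ Set.Ioo (0 : ℝ) Λ,
    C * α ^ (2 * mu - 1 + eps2) ≤ ∑' i, (if α < lam i then lam i ^ (2 * mu - 1) * om i ^ 2 else 0)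


/-! ### Auxiliary lemmas -/

/-- `√(x+y) ≤ √x + √y`. -/
lemma aux_sqrt_add_le {x y : ℝ} (hx : 0 ≤ x) (hy : 0 ≤ y) :
    Real.sqrt (x + y) ≤ Real.sqrt x + Real.sqrt y := by
  nlinarith [Real.sq_sqrt hx, Real.sq_sqrt hy, Real.sqrt_nonneg x, Real.sqrt_nonneg y,
    Real.sq_sqrt (by linarith : (0:ℝ) ≤ x + y), Real.sqrt_nonneg (x+y)]

/-- weighted AM-GM : `a^s * b^(2-s) ≤ (a+b)^2` for `s ∈ [0,2]`. -/
lemma aux_amgm {a b : ℝ} (ha : 0 < a) (hb : 0 < b) {s : ℝ} (hs0 : 0 ≤ s) (hs2 : s ≤ 2) :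
    a ^ s * b ^ (2 - s) ≤ (a + b) ^ (2:ℕ) := by
  have h1 : a ^ s ≤ (a+b) ^ s := Real.rpow_le_rpow ha.le (by linarith) hs0
  have h2 : b ^ (2-s) ≤ (a+b) ^ (2-s) := Real.rpow_le_rpow hb.le (by linarith) (by linarith)
  have hab : (0:ℝ) < a + b := by linarith
  calc a^s * b^(2-s) ≤ (a+b)^s * (a+b)^(2-s) :=
        mul_le_mul h1 h2 (Real.rpow_nonneg hb.le _) (Real.rpow_nonneg hab.le _)
    _ = (a+b) ^ ((2:ℝ)) := by rw [← Real.rpow_add hab]; norm_num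
    _ = (a+b) ^ (2:ℕ) := by rw [show ((2:ℝ)) = ((2:ℕ):ℝ) by norm_num, Real.rpow_natCast]

/-- template : `X * (a^s * b^(2-s)) / (a+b)^2 ≤ X`. -/
lemma aux_frac_le {a b : ℝ} (ha : 0 < a) (hb : 0 < b) {s : ℝ} (hs0 : 0 ≤ s) (hs2 : s ≤ 2)
    {X : ℝ} (hX : 0 ≤ X) : X * (a ^ s * b ^ (2 - s)) / (a + b) ^ (2:ℕ) ≤ X := by
  rw [div_le_iff₀ (by positivity)]
  calc X * (a ^ s * b ^ (2-s)) ≤ X * ((a+b)^(2:ℕ)) :=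
        mul_le_mul_of_nonneg_left (aux_amgm ha hb hs0 hs2) hX
    _ = X * (a+b)^(2:ℕ) := by ring

/-- quadratic splitting for weighted sums. -/
lemma aux_tsum_quad {W a b c : ℕ → ℝ} (hW : ∀ i, 0 ≤ W i) (habc : ∀ i, a i + b i = c i)
    (ha : Summable fun i => W i * a i ^ 2) (hb : Summable fun i => W i * b i ^ 2) :
    ∑' i, W i * c i ^ 2 ≤ 2 * ∑' i, W i * a i ^ 2 + 2 * ∑' i, W i * b i ^ 2 := by
  have hpt : ∀ i, W i * c i ^ 2 ≤ 2 * (W i * a i ^ 2) + 2 * (W i * b i ^ 2) := by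
    intro i
    rw [← habc i]
    nlinarith [mul_nonneg (hW i) (sq_nonneg (a i - b i))]
  have hsum : Summable fun i => 2 * (W i * a i ^ 2) + 2 * (W i * b i ^ 2) :=
    ((ha.mul_left 2).add (hb.mul_left 2))
  calc ∑' i, W i * c i ^ 2 ≤ ∑' i, (2 * (W i * a i ^ 2) + 2 * (W i * b i ^ 2)) :=
        Summable.tsum_le_tsum hpt (hsum.of_nonneg_of_le
          (fun i => mul_nonneg (hW i) (sq_nonneg _)) hpt) hsum
    _ = 2 * ∑' i, W i * a i ^ 2 + 2 * ∑' i, W i * b i ^ 2 := by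
        rw [Summable.tsum_add (ha.mul_left 2) (hb.mul_left 2), tsum_mul_left, tsum_mul_left]


section Pointwise

variable {Λ p q μ α : ℝ} {lam e xdag ω : ℕ → ℝ} {i : ℕ}

/-- pointwise bound for the noise part of `ψ_HD²`. -/
lemma pb_e (hl : 0 < lam i) (hα : 0 < α) (hp : 0 ≤ p) (hq1 : p ≤ q) (hq2 : q ≤ p + 1) :
    lam i ^ (2*q) * α ^ (1-2*q) * e i ^ 2 / (lam i + α) ^ 2
      ≤ α ^ (-(1+2*p)) * (lam i ^ (2*p) * e i ^ 2) := by
  have e1 : lam i ^ (2*q) = lam i ^ (2*p) * lam i ^ (2*q-2*p) := by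
    rw [← Real.rpow_add hl]; congr 1; ring
  have e2 : α ^ (1-2*q) = α ^ (-(1+2*p)) * α ^ (2-(2*q-2*p)) := by
    rw [← Real.rpow_add hα]; congr 1; ring
  have hX : 0 ≤ α ^ (-(1+2*p)) * (lam i ^ (2*p) * e i ^ 2) :=
    mul_nonneg (Real.rpow_nonneg hα.le _)
      (mul_nonneg (Real.rpow_nonneg hl.le _) (sq_nonneg _))
  calc lam i ^ (2*q) * α ^ (1-2*q) * e i ^ 2 / (lam i + α) ^ 2
      = (α ^ (-(1+2*p)) * (lam i ^ (2*p) * e i ^ 2)) *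
          (lam i ^ (2*q-2*p) * α ^ (2-(2*q-2*p))) / (lam i + α) ^ 2 := by
        rw [e1, e2]; ring
    _ ≤ _ := aux_frac_le hl hα (by linarith) (by linarith) hX

/-- squared coefficients of the exact data. -/
lemma ycoeff_sq (hl : 0 < lam i) (hsrc : xdag i = lam i ^ μ * ω i) :
    (yCoeff lam xdag i) ^ 2 = lam i ^ (2*μ+1) * ω i ^ 2 := by
  have h1 : (Real.sqrt (lam i)) ^ 2 = lam i := Real.sq_sqrt hl.le
  have h2 : (lam i ^ μ) ^ 2 = lam i ^ (2*μ) := by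
    rw [← Real.rpow_natCast (lam i ^ μ) 2, ← Real.rpow_mul hl.le]
    congr 1; push_cast; ring
  have h3 : lam i ^ (2*μ+1) = lam i ^ (2*μ) * lam i := Real.rpow_add_one (ne_of_gt hl) _
  simp only [yCoeff, hsrc, mul_pow]
  rw [h1, h2, h3]; ring

/-- pointwise bound for the exact-data part of `ψ_HD²`. -/
lemma pb_y (hl : 0 < lam i) (hα : 0 < α) (hsrc : xdag i = lam i ^ μ * ω i)
    (hq0 : 0 ≤ q) (hμ0 : 0 ≤ μ) (hqμ : q ≤ 1/2 - μ) :
    lam i ^ (2*q) * α ^ (1-2*q) * (yCoeff lam xdag i) ^ 2 / (lam i + α) ^ 2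
      ≤ α ^ (2*μ) * ω i ^ 2 := by
  have e1 : lam i ^ (2*q) * lam i ^ (2*μ+1) = lam i ^ (2*q+2*μ+1) := by
    rw [← Real.rpow_add hl]; congr 1; ring
  have e2 : α ^ (1-2*q) = α ^ (2*μ) * α ^ (2-(2*q+2*μ+1)) := by
    rw [← Real.rpow_add hα]; congr 1; ring
  have hX : 0 ≤ α ^ (2*μ) * ω i ^ 2 :=
    mul_nonneg (Real.rpow_nonneg hα.le _) (sq_nonneg _)
  calc lam i ^ (2*q) * α ^ (1-2*q) * (yCoeff lam xdag i) ^ 2 / (lam i + α) ^ 2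
      = (α ^ (2*μ) * ω i ^ 2) *
          (lam i ^ (2*q+2*μ+1) * α ^ (2-(2*q+2*μ+1))) / (lam i + α) ^ 2 := by
        rw [ycoeff_sq hl hsrc, ← e1, e2]; ring
    _ ≤ _ := aux_frac_le hl hα (by linarith) (by linarith) hX

/-- pointwise bound for the approximation error. -/
lemma pb_approx (hl : 0 < lam i) (hα : 0 < α) (hsrc : xdag i = lam i ^ μ * ω i)
    (hμ0 : 0 ≤ μ) (hμ1 : μ ≤ 1) :
    α ^ 2 * xdag i ^ 2 / (lam i + α) ^ 2 ≤ α ^ (2*μ) * ω i ^ 2 := by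
  have h2 : (lam i ^ μ) ^ 2 = lam i ^ (2*μ) := by
    rw [← Real.rpow_natCast (lam i ^ μ) 2, ← Real.rpow_mul hl.le]
    congr 1; push_cast; ring
  have e2 : (α:ℝ) ^ (2:ℕ) = α ^ (2*μ) * α ^ (2-2*μ) := by
    rw [← Real.rpow_add hα, ← Real.rpow_natCast α 2]; congr 1; push_cast; ring
  have hX : 0 ≤ α ^ (2*μ) * ω i ^ 2 :=
    mul_nonneg (Real.rpow_nonneg hα.le _) (sq_nonneg _)
  calc α ^ 2 * xdag i ^ 2 / (lam i + α) ^ 2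
      = (α ^ (2*μ) * ω i ^ 2) * (lam i ^ (2*μ) * α ^ (2-2*μ)) / (lam i + α) ^ 2 := by
        rw [hsrc, mul_pow, h2, e2]; ring
    _ ≤ _ := aux_frac_le hl hα (by linarith) (by linarith) hX

/-- pointwise bound for the data error, small-`λ` form. -/
lemma pb_data_low (hl : 0 < lam i) (hα : 0 < α) (hq0 : 0 ≤ q) (hq12 : q ≤ 1/2) :
    lam i * e i ^ 2 / (lam i + α) ^ 2 ≤ α ^ (-(1+2*q)) * (lam i ^ (2*q) * e i ^ 2) := by
  have e1 : lam i = lam i ^ (2*q) * lam i ^ (1-2*q) := by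
    rw [← Real.rpow_add hl, show 2*q + (1-2*q) = 1 by ring, Real.rpow_one]
  have e2 : α ^ (-(1+2*q)) * α ^ (2-(1-2*q)) = 1 := by
    rw [← Real.rpow_add hα, show -(1+2*q) + (2-(1-2*q)) = 0 by ring, Real.rpow_zero]
  have hX : 0 ≤ α ^ (-(1+2*q)) * (lam i ^ (2*q) * e i ^ 2) :=
    mul_nonneg (Real.rpow_nonneg hα.le _)
      (mul_nonneg (Real.rpow_nonneg hl.le _) (sq_nonneg _))
  have key : (α ^ (-(1+2*q)) * (lam i ^ (2*q) * e i ^ 2)) *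
      (lam i ^ (1-2*q) * α ^ (2-(1-2*q))) = lam i * e i ^ 2 := by
    calc (α ^ (-(1+2*q)) * (lam i ^ (2*q) * e i ^ 2)) *
        (lam i ^ (1-2*q) * α ^ (2-(1-2*q)))
        = (α ^ (-(1+2*q)) * α ^ (2-(1-2*q))) *
            (lam i ^ (2*q) * lam i ^ (1-2*q)) * e i ^ 2 := by ring
      _ = 1 * lam i * e i ^ 2 := by rw [e2, ← e1]
      _ = lam i * e i ^ 2 := by ring
  calc lam i * e i ^ 2 / (lam i + α) ^ 2
      = (α ^ (-(1+2*q)) * (lam i ^ (2*q) * e i ^ 2)) *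
          (lam i ^ (1-2*q) * α ^ (2-(1-2*q))) / (lam i + α) ^ 2 := by
        rw [key]
    _ ≤ _ := aux_frac_le hl hα (by linarith) (by linarith) hX

/-- pointwise bound for the data error, large-`λ` form. -/
lemma pb_data_high (hl : 0 < lam i) (hα : 0 < α) :
    lam i * e i ^ 2 / (lam i + α) ^ 2 ≤ e i ^ 2 / lam i := by
  rw [div_le_div_iff₀ (by positivity) hl]
  nlinarith [mul_nonneg (sq_nonneg (e i)) (mul_nonneg hl.le hα.le),
    mul_nonneg (sq_nonneg (e i)) (mul_nonneg hα.le hα.le)]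

end Pointwise


section Pointwise2

variable {Λ p q μ α : ℝ} {lam e xdag ω : ℕ → ℝ} {i : ℕ}

/-- pointwise bound for the high-frequency noise sum. -/
lemma pb_high (hl : 0 < lam i) (hα : 0 < α) (hp : 0 ≤ p) :
    (if α < lam i then e i ^ 2 / lam i else 0)
      ≤ α ^ (-(1+2*p)) * (lam i ^ (2*p) * e i ^ 2) := by
  have hX : 0 ≤ α ^ (-(1+2*p)) * (lam i ^ (2*p) * e i ^ 2) :=
    mul_nonneg (Real.rpow_nonneg hα.le _)
      (mul_nonneg (Real.rpow_nonneg hl.le _) (sq_nonneg _))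
  split_ifs with h
  · have h1 : α ^ (1+2*p) ≤ lam i ^ (1+2*p) :=
      Real.rpow_le_rpow hα.le h.le (by linarith)
    have h2 : α ^ (-(1+2*p)) * α ^ (1+2*p) = 1 := by
      rw [← Real.rpow_add hα, show -(1+2*p) + (1+2*p) = 0 by ring, Real.rpow_zero]
    have h3 : lam i ^ (2*p) * lam i = lam i ^ (1+2*p) := by
      rw [show (1+2*p : ℝ) = 2*p + 1 by ring, Real.rpow_add_one (ne_of_gt hl)]
    rw [div_le_iff₀ hl]
    calc e i ^ 2 = (α ^ (-(1+2*p)) * α ^ (1+2*p)) * e i ^ 2 := by rw [h2]; ring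
      _ ≤ (α ^ (-(1+2*p)) * lam i ^ (1+2*p)) * e i ^ 2 := by
          have h4 := Real.rpow_nonneg hα.le (-(1+2*p))
          nlinarith [mul_nonneg (mul_nonneg h4 (sub_nonneg.mpr h1)) (sq_nonneg (e i))]
      _ = α ^ (-(1+2*p)) * (lam i ^ (2*p) * e i ^ 2) * lam i := by rw [← h3]; ring
  · exact hX

/-- pointwise bound relating small-frequency noise to the `ψ_HD²` summand. -/
lemma pb_low (hl : 0 < lam i) (hα : 0 < α) :
    (if lam i ≤ α then lam i ^ (2*q) * e i ^ 2 else 0)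
      ≤ 4 * α ^ (1+2*q) *
          (lam i ^ (2*q) * α ^ (1-2*q) * e i ^ 2 / (lam i + α) ^ 2) := by
  have hnn : (0:ℝ) ≤ lam i ^ (2*q) * e i ^ 2 :=
    mul_nonneg (Real.rpow_nonneg hl.le _) (sq_nonneg _)
  have hα2 : α ^ (1+2*q) * α ^ (1-2*q) = α ^ (2:ℕ) := by
    rw [← Real.rpow_add hα, ← Real.rpow_natCast α 2]; congr 1; push_cast; ring
  have hα1 : 0 ≤ α ^ (1+2*q) := Real.rpow_nonneg hα.le _
  have hw : 0 ≤ lam i ^ (2*q) * α ^ (1-2*q) * e i ^ 2 / (lam i + α) ^ 2 := by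
    have h5 := Real.rpow_nonneg hα.le (1-2*q)
    have h6 := Real.rpow_nonneg hl.le (2*q)
    positivity
  split_ifs with h
  · rw [mul_div_assoc', le_div_iff₀ (by positivity)]
    have key : 4 * α ^ (1+2*q) * (lam i ^ (2*q) * α ^ (1-2*q) * e i ^ 2)
        = lam i ^ (2*q) * e i ^ 2 * (4 * α ^ (2:ℕ)) := by
      calc 4 * α ^ (1+2*q) * (lam i ^ (2*q) * α ^ (1-2*q) * e i ^ 2)
          = (α ^ (1+2*q) * α ^ (1-2*q)) * (4 * (lam i ^ (2*q) * e i ^ 2)) := by ring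
        _ = _ := by rw [hα2]; ring
    rw [key]
    nlinarith [mul_nonneg hnn (show (0:ℝ) ≤ 4*α^(2:ℕ) - (lam i + α)^2 by nlinarith)]
  · positivity

/-- pointwise bound for the total error. -/
lemma pb_total (hl : 0 < lam i) (hα : 0 < α) :
    (Real.sqrt (lam i) * e i - α * xdag i) ^ 2 / (lam i + α) ^ 2
      ≤ 2 * (lam i * e i ^ 2 / (lam i + α) ^ 2) + 2 * (α ^ 2 * xdag i ^ 2 / (lam i + α) ^ 2) := by
  have hs := Real.sq_sqrt hl.le
  have hnum : (Real.sqrt (lam i) * e i - α * xdag i) ^ 2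
      ≤ 2 * (lam i * e i ^ 2) + 2 * (α ^ 2 * xdag i ^ 2) := by
    nlinarith [sq_nonneg (Real.sqrt (lam i) * e i + α * xdag i)]
  calc (Real.sqrt (lam i) * e i - α * xdag i) ^ 2 / (lam i + α) ^ 2
      ≤ (2 * (lam i * e i ^ 2) + 2 * (α ^ 2 * xdag i ^ 2)) / (lam i + α) ^ 2 := by
        gcongr
    _ = _ := by ring

end Pointwise2


section Sums

variable {Λ p q μ α CN : ℝ} {lam e xdag ω : ℕ → ℝ}

/-- nonnegativity of the `ψ_HD²` summand. -/
lemma psi_summand_nonneg (hl : ∀ i, 0 < lam i) (hα : 0 < α) (c : ℕ → ℝ) (i : ℕ) :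
    0 ≤ lam i ^ (2*q) * α ^ (1-2*q) * c i ^ 2 / (lam i + α) ^ 2 := by
  have h1 := (hl i)
  have h2 := Real.rpow_nonneg (h1).le (2*q)
  have h3 := Real.rpow_nonneg hα.le (1-2*q)
  positivity

lemma psiHDsq_nonneg (hl : ∀ i, 0 < lam i) (hα : 0 < α) (c : ℕ → ℝ) :
    0 ≤ psiHDsq lam c q α :=
  tsum_nonneg (psi_summand_nonneg hl hα c)

/-- summability of `λ^{2q} e²`. -/
lemma summable_lam2q_e (hlam : ∀ i, 0 < lam i ∧ lam i ≤ Λ) (hq1 : p ≤ q)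
    (he : Summable fun i => lam i ^ (2*p) * e i ^ 2) :
    Summable fun i => lam i ^ (2*q) * e i ^ 2 := by
  apply ((he.mul_left (Λ ^ (2*q-2*p))).of_nonneg_of_le
    (fun i => mul_nonneg (Real.rpow_nonneg (hlam i).1.le _) (sq_nonneg _)))
  intro i
  obtain ⟨hl, hL⟩ := hlam i
  have e1 : lam i ^ (2*q) = lam i ^ (2*p) * lam i ^ (2*q-2*p) := by
    rw [← Real.rpow_add hl]; congr 1; ring
  have h2 : lam i ^ (2*q-2*p) ≤ Λ ^ (2*q-2*p) :=
    Real.rpow_le_rpow hl.le hL (by linarith)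
  calc lam i ^ (2*q) * e i ^ 2 = lam i ^ (2*q-2*p) * (lam i ^ (2*p) * e i ^ 2) := by
        rw [e1]; ring
    _ ≤ Λ ^ (2*q-2*p) * (lam i ^ (2*p) * e i ^ 2) := by
        apply mul_le_mul_of_nonneg_right h2
        exact mul_nonneg (Real.rpow_nonneg hl.le _) (sq_nonneg _)

/-- summability of the noise `ψ_HD²` summand. -/
lemma summable_psi_e (hlam : ∀ i, 0 < lam i ∧ lam i ≤ Λ) (hα : 0 < α) (hp : 0 ≤ p)
    (hq1 : p ≤ q) (hq2 : q ≤ p + 1)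
    (he : Summable fun i => lam i ^ (2*p) * e i ^ 2) :
    Summable fun i => lam i ^ (2*q) * α ^ (1-2*q) * e i ^ 2 / (lam i + α) ^ 2 :=
  (he.mul_left (α ^ (-(1+2*p)))).of_nonneg_of_le
    (psi_summand_nonneg (fun i => (hlam i).1) hα e)
    (fun i => pb_e (hlam i).1 hα hp hq1 hq2)

/-- bound for the noise part of `ψ_HD²`. -/
lemma psiHDsq_e_le (hlam : ∀ i, 0 < lam i ∧ lam i ≤ Λ) (hα : 0 < α) (hp : 0 ≤ p)
    (hq1 : p ≤ q) (hq2 : q ≤ p + 1)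
    (he : Summable fun i => lam i ^ (2*p) * e i ^ 2) :
    psiHDsq lam e q α ≤ etaSq lam e p * α ^ (-(1+2*p)) := by
  have h := Summable.tsum_le_tsum (fun i => pb_e (hlam i).1 hα hp hq1 hq2)
    (summable_psi_e hlam hα hp hq1 hq2 he) (he.mul_left (α ^ (-(1+2*p))))
  calc psiHDsq lam e q α ≤ ∑' i, α ^ (-(1+2*p)) * (lam i ^ (2*p) * e i ^ 2) := h
    _ = α ^ (-(1+2*p)) * etaSq lam e p := tsum_mul_left
    _ = etaSq lam e p * α ^ (-(1+2*p)) := mul_comm _ _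

/-- summability of the exact-data `ψ_HD²` summand. -/
lemma summable_psi_y (hlam : ∀ i, 0 < lam i ∧ lam i ≤ Λ) (hα : 0 < α)
    (hsrc : ∀ i, xdag i = lam i ^ μ * ω i) (hω : Summable fun i => ω i ^ 2)
    (hq0 : 0 ≤ q) (hμ0 : 0 ≤ μ) (hqμ : q ≤ 1/2 - μ) :
    Summable fun i =>
      lam i ^ (2*q) * α ^ (1-2*q) * (yCoeff lam xdag i) ^ 2 / (lam i + α) ^ 2 :=
  (hω.mul_left (α ^ (2*μ))).of_nonneg_of_le
    (psi_summand_nonneg (fun i => (hlam i).1) hα _)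
    (fun i => by
      have := pb_y (i := i) (hlam i).1 hα (hsrc i) hq0 hμ0 hqμ
      simpa using this)

/-- bound for the exact-data part of `ψ_HD²`. -/
lemma psiHDsq_y_le (hlam : ∀ i, 0 < lam i ∧ lam i ≤ Λ) (hα : 0 < α)
    (hsrc : ∀ i, xdag i = lam i ^ μ * ω i) (hω : Summable fun i => ω i ^ 2)
    (hq0 : 0 ≤ q) (hμ0 : 0 ≤ μ) (hqμ : q ≤ 1/2 - μ) :
    psiHDsq lam (yCoeff lam xdag) q α ≤ (∑' i, ω i ^ 2) * α ^ (2*μ) := by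
  have h := Summable.tsum_le_tsum (fun i => pb_y (i := i) (hlam i).1 hα (hsrc i) hq0 hμ0 hqμ)
    (summable_psi_y hlam hα hsrc hω hq0 hμ0 hqμ) (hω.mul_left (α ^ (2*μ)))
  calc psiHDsq lam (yCoeff lam xdag) q α ≤ ∑' i, α ^ (2*μ) * ω i ^ 2 := h
    _ = α ^ (2*μ) * ∑' i, ω i ^ 2 := tsum_mul_left
    _ = _ := mul_comm _ _

/-- bound for the approximation error. -/
lemma approxErrSq_le (hlam : ∀ i, 0 < lam i ∧ lam i ≤ Λ) (hα : 0 < α)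
    (hsrc : ∀ i, xdag i = lam i ^ μ * ω i) (hω : Summable fun i => ω i ^ 2)
    (hμ0 : 0 ≤ μ) (hμ1 : μ ≤ 1) :
    approxErrSq lam xdag α ≤ (∑' i, ω i ^ 2) * α ^ (2*μ) := by
  have hpt : ∀ i, α ^ 2 * xdag i ^ 2 / (lam i + α) ^ 2 ≤ α ^ (2*μ) * ω i ^ 2 :=
    fun i => pb_approx (hlam i).1 hα (hsrc i) hμ0 hμ1
  have hnn : ∀ i, 0 ≤ α ^ 2 * xdag i ^ 2 / (lam i + α) ^ 2 := by
    intro i; have := (hlam i).1; positivity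
  have h := Summable.tsum_le_tsum hpt
    ((hω.mul_left (α ^ (2*μ))).of_nonneg_of_le hnn hpt) (hω.mul_left (α ^ (2*μ)))
  calc approxErrSq lam xdag α ≤ ∑' i, α ^ (2*μ) * ω i ^ 2 := h
    _ = α ^ (2*μ) * ∑' i, ω i ^ 2 := tsum_mul_left
    _ = _ := mul_comm _ _

/-- summability of the approximation-error summand. -/
lemma summable_approx (hlam : ∀ i, 0 < lam i ∧ lam i ≤ Λ) (hα : 0 < α)
    (hsrc : ∀ i, xdag i = lam i ^ μ * ω i) (hω : Summable fun i => ω i ^ 2)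
    (hμ0 : 0 ≤ μ) (hμ1 : μ ≤ 1) :
    Summable fun i => α ^ 2 * xdag i ^ 2 / (lam i + α) ^ 2 := by
  have hpt : ∀ i, α ^ 2 * xdag i ^ 2 / (lam i + α) ^ 2 ≤ α ^ (2*μ) * ω i ^ 2 :=
    fun i => pb_approx (hlam i).1 hα (hsrc i) hμ0 hμ1
  have hnn : ∀ i, 0 ≤ α ^ 2 * xdag i ^ 2 / (lam i + α) ^ 2 := by
    intro i; have := (hlam i).1; positivity
  exact (hω.mul_left (α ^ (2*μ))).of_nonneg_of_le hnn hpt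

/-- single-mode lower bound for the exact-data part of `ψ_HD²`. -/
lemma psiHDsq_y_ge (hlam : ∀ i, 0 < lam i ∧ lam i ≤ Λ) (hΛ : 0 < Λ)
    (hα : α ∈ Set.Ioo (0:ℝ) Λ)
    (hsrc : ∀ i, xdag i = lam i ^ μ * ω i) (hω : Summable fun i => ω i ^ 2)
    (hq0 : 0 ≤ q) (hμ0 : 0 ≤ μ) (hqμ : q ≤ 1/2 - μ) (i₀ : ℕ) :
    lam i₀ ^ (2*q+1) * xdag i₀ ^ 2 / (4*Λ^2) * α ^ (1-2*q)
      ≤ psiHDsq lam (yCoeff lam xdag) q α := by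
  obtain ⟨hα0, hαΛ⟩ := hα
  obtain ⟨hl, hL⟩ := hlam i₀
  have hterm := Summable.le_tsum (summable_psi_y hlam hα0 hsrc hω hq0 hμ0 hqμ) i₀
    (fun j _ => psi_summand_nonneg (fun i => (hlam i).1) hα0 _ j)
  refine le_trans ?_ hterm
  have hy2 : (yCoeff lam xdag i₀) ^ 2 = lam i₀ * xdag i₀ ^ 2 := by
    simp only [yCoeff, mul_pow, Real.sq_sqrt hl.le]
  have h3 : lam i₀ ^ (2*q+1) = lam i₀ ^ (2*q) * lam i₀ := Real.rpow_add_one (ne_of_gt hl) _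
  rw [hy2, h3]
  have hden : (lam i₀ + α) ^ 2 ≤ 4*Λ^2 := by nlinarith
  have hαq : 0 ≤ α ^ (1-2*q) := Real.rpow_nonneg hα0.le _
  have hnum : 0 ≤ lam i₀ ^ (2*q) * lam i₀ * xdag i₀ ^ 2 :=
    mul_nonneg (mul_nonneg (Real.rpow_nonneg hl.le _) hl.le) (sq_nonneg _)
  calc lam i₀ ^ (2*q) * lam i₀ * xdag i₀ ^ 2 / (4*Λ^2) * α ^ (1-2*q)
      ≤ lam i₀ ^ (2*q) * lam i₀ * xdag i₀ ^ 2 / (lam i₀ + α) ^ 2 * α ^ (1-2*q) := by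
        apply mul_le_mul_of_nonneg_right _ hαq
        apply div_le_div_of_nonneg_left hnum (by positivity) hden
    _ = lam i₀ ^ (2*q) * α ^ (1-2*q) * (lam i₀ * xdag i₀ ^ 2) / (lam i₀ + α) ^ 2 := by
        ring
end Sums


section DataErr

variable {Λ p q α CN : ℝ} {lam e : ℕ → ℝ}

/-- the data error is controlled by the heuristic functional under the noise condition. -/
lemma dataErrSq_le (hlam : ∀ i, 0 < lam i ∧ lam i ≤ Λ) (hα : α ∈ Set.Ioo (0:ℝ) Λ)
    (hp : 0 ≤ p) (hq1 : p ≤ q) (hq2 : q ≤ p + 1) (hq12 : q ≤ 1/2)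
    (he : Summable fun i => lam i ^ (2*p) * e i ^ 2)
    (hnc : noiseCondC lam e Λ (2*q) CN) (hCN : 0 < CN) :
    dataErrSq lam e α ≤ 4*(1+CN) * psiHDsq lam e q α := by
  obtain ⟨hα0, hαΛ⟩ := hα
  set L := ∑' i, (if lam i ≤ α then lam i ^ (2*q) * e i ^ 2 else 0) with hL
  set H := ∑' i, (if α < lam i then e i ^ 2 / lam i else 0) with hH
  have hl : ∀ i, 0 < lam i := fun i => (hlam i).1
  -- summabilities
  have hsum2q := summable_lam2q_e hlam hq1 he
  have hsumL : Summable fun i => (if lam i ≤ α then lam i ^ (2*q) * e i ^ 2 else 0) := by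
    apply hsum2q.of_nonneg_of_le
    · intro i; split_ifs
      · exact mul_nonneg (Real.rpow_nonneg (hl i).le _) (sq_nonneg _)
      · exact le_refl 0
    · intro i; split_ifs
      · exact le_refl _
      · exact mul_nonneg (Real.rpow_nonneg (hl i).le _) (sq_nonneg _)
  have hsumH : Summable fun i => (if α < lam i then e i ^ 2 / lam i else 0) := by
    apply (he.mul_left (α ^ (-(1+2*p)))).of_nonneg_of_le
    · intro i; split_ifs
      · have := hl i; positivity
      · exact le_refl 0
    · exact fun i => pb_high (hl i) hα0 hp
  have hsumpsi := summable_psi_e hlam hα0 hp hq1 hq2 he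
  have hLnn : 0 ≤ L := tsum_nonneg (by
    intro i; split_ifs
    · exact mul_nonneg (Real.rpow_nonneg (hl i).le _) (sq_nonneg _)
    · exact le_refl 0)
  -- pointwise split of the data error
  have hpt : ∀ i, lam i * e i ^ 2 / (lam i + α) ^ 2
      ≤ (if lam i ≤ α then α ^ (-(1+2*q)) * (lam i ^ (2*q) * e i ^ 2) else 0)
        + (if α < lam i then e i ^ 2 / lam i else 0) := by
    intro i
    by_cases h : lam i ≤ α
    · rw [if_pos h, if_neg (not_lt.mpr h), add_zero]
      exact pb_data_low (hl i) hα0 (le_trans hp hq1) hq12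
    · rw [if_neg h, if_pos (not_le.mp h), zero_add]
      exact pb_data_high (hl i) hα0
  have hsumf1 : Summable fun i =>
      (if lam i ≤ α then α ^ (-(1+2*q)) * (lam i ^ (2*q) * e i ^ 2) else 0) := by
    have : (fun i => (if lam i ≤ α then α ^ (-(1+2*q)) * (lam i ^ (2*q) * e i ^ 2) else 0))
        = fun i => α ^ (-(1+2*q)) * (if lam i ≤ α then lam i ^ (2*q) * e i ^ 2 else 0) := by
      funext i; split_ifs <;> simp
    rw [this]
    exact hsumL.mul_left _
  have hdata_sum : Summable fun i => lam i * e i ^ 2 / (lam i + α) ^ 2 := by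
    apply (hsumf1.add hsumH).of_nonneg_of_le _ hpt
    intro i; have := hl i; positivity
  -- sum the pointwise split
  have step1 : dataErrSq lam e α ≤ α ^ (-(1+2*q)) * L + H := by
    have h1 := Summable.tsum_le_tsum hpt hdata_sum (hsumf1.add hsumH)
    have h2 : ∑' i, ((if lam i ≤ α then α ^ (-(1+2*q)) * (lam i ^ (2*q) * e i ^ 2) else 0)
        + (if α < lam i then e i ^ 2 / lam i else 0))
        = α ^ (-(1+2*q)) * L + H := by
      rw [Summable.tsum_add hsumf1 hsumH]
      congr 1
      have : (fun i => (if lam i ≤ α then α ^ (-(1+2*q)) * (lam i ^ (2*q) * e i ^ 2) else 0))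
          = fun i => α ^ (-(1+2*q)) * (if lam i ≤ α then lam i ^ (2*q) * e i ^ 2 else 0) := by
        funext i; split_ifs <;> simp
      rw [this, tsum_mul_left]
    exact h2 ▸ h1
  -- noise condition
  have hnoise := hnc α ⟨hα0, hαΛ⟩
  have hHle : H ≤ CN * L * α ^ (-(1+2*q)) := by
    have hαpow : (0:ℝ) < α ^ (2*q+1) := Real.rpow_pos_of_pos hα0 _
    have hinv : α ^ (-(1+2*q)) * α ^ (2*q+1) = 1 := by
      rw [← Real.rpow_add hα0, show -(1+2*q) + (2*q+1) = 0 by ring, Real.rpow_zero]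
    have h5 : α ^ (2*q+1) * H ≤ CN * L := hnoise
    calc H = α ^ (-(1+2*q)) * (α ^ (2*q+1) * H) := by
          rw [← mul_assoc, hinv, one_mul]
      _ ≤ α ^ (-(1+2*q)) * (CN * L) :=
          mul_le_mul_of_nonneg_left h5 (Real.rpow_nonneg hα0.le _)
      _ = CN * L * α ^ (-(1+2*q)) := by ring
  -- L vs ψ_HD²
  have hLpsi : L ≤ 4 * α ^ (1+2*q) * psiHDsq lam e q α := by
    have h6 := Summable.tsum_le_tsum (fun i => pb_low (q := q) (hl i) hα0) hsumL
      (hsumpsi.mul_left (4 * α ^ (1+2*q)))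
    calc L ≤ ∑' i, 4 * α ^ (1+2*q) *
          (lam i ^ (2*q) * α ^ (1-2*q) * e i ^ 2 / (lam i + α) ^ 2) := h6
      _ = 4 * α ^ (1+2*q) * psiHDsq lam e q α := tsum_mul_left
  -- combine
  have hinv2 : α ^ (-(1+2*q)) * α ^ (1+2*q) = 1 := by
    rw [← Real.rpow_add hα0, show -(1+2*q) + (1+2*q) = 0 by ring, Real.rpow_zero]
  have hαneg : 0 ≤ α ^ (-(1+2*q)) := Real.rpow_nonneg hα0.le _
  calc dataErrSq lam e α ≤ α ^ (-(1+2*q)) * L + H := step1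
    _ ≤ α ^ (-(1+2*q)) * L + CN * L * α ^ (-(1+2*q)) := by linarith
    _ = (1+CN) * (α ^ (-(1+2*q)) * L) := by ring
    _ ≤ (1+CN) * (α ^ (-(1+2*q)) * (4 * α ^ (1+2*q) * psiHDsq lam e q α)) := by
        apply mul_le_mul_of_nonneg_left _ (by linarith)
        exact mul_le_mul_of_nonneg_left hLpsi hαneg
    _ = 4*(1+CN) * ((α ^ (-(1+2*q)) * α ^ (1+2*q)) * psiHDsq lam e q α) := by ring
    _ = 4*(1+CN) * psiHDsq lam e q α := by rw [hinv2, one_mul]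

end DataErr


section Tri

variable {Λ p q μ α : ℝ} {lam e xdag ω : ℕ → ℝ}

lemma summable_dataErr (hlam : ∀ i, 0 < lam i ∧ lam i ≤ Λ) (hα : 0 < α)
    (hq0 : 0 ≤ q) (hq1 : p ≤ q) (hq12 : q ≤ 1/2)
    (he : Summable fun i => lam i ^ (2*p) * e i ^ 2) :
    Summable fun i => lam i * e i ^ 2 / (lam i + α) ^ 2 := by
  apply (((summable_lam2q_e hlam hq1 he).mul_left (α ^ (-(1+2*q)))).of_nonneg_of_le)
  · intro i; have := (hlam i).1; positivity
  · exact fun i => pb_data_low (hlam i).1 hα hq0 hq12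

/-- splitting of the total error. -/
lemma totalErrSq_le (hlam : ∀ i, 0 < lam i ∧ lam i ≤ Λ) (hα : 0 < α)
    (hq0 : 0 ≤ q) (hq1 : p ≤ q) (hq12 : q ≤ 1/2)
    (hsrc : ∀ i, xdag i = lam i ^ μ * ω i) (hω : Summable fun i => ω i ^ 2)
    (hμ0 : 0 ≤ μ) (hμ1 : μ ≤ 1)
    (he : Summable fun i => lam i ^ (2*p) * e i ^ 2) :
    totalErrSq lam xdag e α ≤ 2 * dataErrSq lam e α + 2 * approxErrSq lam xdag α := by
  have hd := summable_dataErr (p := p) (q := q) hlam hα hq0 hq1 hq12 he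
  have ha := summable_approx hlam hα hsrc hω hμ0 hμ1
  have hpt : ∀ i, (Real.sqrt (lam i) * e i - α * xdag i) ^ 2 / (lam i + α) ^ 2
      ≤ 2 * (lam i * e i ^ 2 / (lam i + α) ^ 2) + 2 * (α ^ 2 * xdag i ^ 2 / (lam i + α) ^ 2) :=
    fun i => pb_total (hlam i).1 hα
  have hsum : Summable fun i => 2 * (lam i * e i ^ 2 / (lam i + α) ^ 2)
      + 2 * (α ^ 2 * xdag i ^ 2 / (lam i + α) ^ 2) := (hd.mul_left 2).add (ha.mul_left 2)
  have h1 := Summable.tsum_le_tsum hpt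
    (hsum.of_nonneg_of_le (fun i => by have := (hlam i).1; positivity) hpt) hsum
  calc totalErrSq lam xdag e α
      ≤ ∑' i, (2 * (lam i * e i ^ 2 / (lam i + α) ^ 2)
          + 2 * (α ^ 2 * xdag i ^ 2 / (lam i + α) ^ 2)) := h1
    _ = 2 * dataErrSq lam e α + 2 * approxErrSq lam xdag α := by
        rw [Summable.tsum_add (hd.mul_left 2) (ha.mul_left 2), tsum_mul_left, tsum_mul_left]
        rfl

/-- `ψ_HD²` as a weighted sum of squared coefficients. -/
lemma psiHDsq_eq (lam c : ℕ → ℝ) (q α : ℝ) :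
    psiHDsq lam c q α
      = ∑' i, (lam i ^ (2*q) * α ^ (1-2*q) / (lam i + α) ^ 2) * c i ^ 2 :=
  tsum_congr fun i => by ring

/-- the weights of `ψ_HD²` are nonnegative and give summable squares. -/
lemma psiW_nonneg (hlam : ∀ i, 0 < lam i ∧ lam i ≤ Λ) (hα : 0 < α) (i : ℕ) :
    0 ≤ lam i ^ (2*q) * α ^ (1-2*q) / (lam i + α) ^ 2 := by
  have h1 := (hlam i).1
  have h2 := Real.rpow_nonneg h1.le (2*q)
  have h3 := Real.rpow_nonneg hα.le (1-2*q)
  positivity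

/-- quadratic triangle inequality, noisy data vs exact data and noise. -/
lemma psiHDsq_tri1 (hlam : ∀ i, 0 < lam i ∧ lam i ≤ Λ) (hα : 0 < α)
    (hsrc : ∀ i, xdag i = lam i ^ μ * ω i) (hω : Summable fun i => ω i ^ 2)
    (hp : 0 ≤ p) (hq1 : p ≤ q) (hq2 : q ≤ p + 1) (hμ0 : 0 ≤ μ) (hqμ : q ≤ 1/2 - μ)
    (he : Summable fun i => lam i ^ (2*p) * e i ^ 2) :
    psiHDsq lam (ydCoeff lam xdag e) q α
      ≤ 2 * psiHDsq lam (yCoeff lam xdag) q α + 2 * psiHDsq lam e q α := by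
  have hq0 : 0 ≤ q := le_trans hp hq1
  have hWy : Summable fun i =>
      (lam i ^ (2*q) * α ^ (1-2*q) / (lam i + α) ^ 2) * (yCoeff lam xdag i) ^ 2 :=
    (summable_psi_y hlam hα hsrc hω hq0 hμ0 hqμ).congr (fun i => by ring)
  have hWe : Summable fun i =>
      (lam i ^ (2*q) * α ^ (1-2*q) / (lam i + α) ^ 2) * e i ^ 2 :=
    (summable_psi_e hlam hα hp hq1 hq2 he).congr (fun i => by ring)
  rw [psiHDsq_eq, psiHDsq_eq, psiHDsq_eq]
  exact aux_tsum_quad (psiW_nonneg hlam hα) (fun i => rfl) hWy hWe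

/-- quadratic triangle inequality, exact data vs noisy data and noise. -/
lemma psiHDsq_tri2 (hlam : ∀ i, 0 < lam i ∧ lam i ≤ Λ) (hα : 0 < α)
    (hsrc : ∀ i, xdag i = lam i ^ μ * ω i) (hω : Summable fun i => ω i ^ 2)
    (hp : 0 ≤ p) (hq1 : p ≤ q) (hq2 : q ≤ p + 1) (hμ0 : 0 ≤ μ) (hqμ : q ≤ 1/2 - μ)
    (he : Summable fun i => lam i ^ (2*p) * e i ^ 2) :
    psiHDsq lam (yCoeff lam xdag) q α
      ≤ 2 * psiHDsq lam (ydCoeff lam xdag e) q α + 2 * psiHDsq lam e q α := by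
  have hq0 : 0 ≤ q := le_trans hp hq1
  have hWy : Summable fun i =>
      (lam i ^ (2*q) * α ^ (1-2*q) / (lam i + α) ^ 2) * (yCoeff lam xdag i) ^ 2 :=
    (summable_psi_y hlam hα hsrc hω hq0 hμ0 hqμ).congr (fun i => by ring)
  have hWe : Summable fun i =>
      (lam i ^ (2*q) * α ^ (1-2*q) / (lam i + α) ^ 2) * e i ^ 2 :=
    (summable_psi_e hlam hα hp hq1 hq2 he).congr (fun i => by ring)
  have hWyd : Summable fun i =>
      (lam i ^ (2*q) * α ^ (1-2*q) / (lam i + α) ^ 2) * (ydCoeff lam xdag e i) ^ 2 := by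
    apply ((hWy.mul_left 2).add (hWe.mul_left 2)).of_nonneg_of_le
      (fun i => mul_nonneg (psiW_nonneg hlam hα i) (sq_nonneg _))
    intro i
    have hW := psiW_nonneg (q := q) hlam hα i
    have : ydCoeff lam xdag e i = yCoeff lam xdag i + e i := rfl
    rw [this]
    nlinarith [mul_nonneg hW (sq_nonneg (yCoeff lam xdag i - e i))]
  have hWme : Summable fun i =>
      (lam i ^ (2*q) * α ^ (1-2*q) / (lam i + α) ^ 2) * (-(e i)) ^ 2 :=
    hWe.congr (fun i => by ring)
  rw [psiHDsq_eq, psiHDsq_eq, psiHDsq_eq]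
  have h := aux_tsum_quad (psiW_nonneg hlam hα)
    (show ∀ i, ydCoeff lam xdag e i + (-(e i)) = yCoeff lam xdag i from fun i => by
      show Real.sqrt (lam i) * xdag i + e i + (-(e i)) = Real.sqrt (lam i) * xdag i
      ring)
    hWyd hWme
  calc ∑' i, (lam i ^ (2*q) * α ^ (1-2*q) / (lam i + α) ^ 2) * (yCoeff lam xdag i) ^ 2
      ≤ 2 * ∑' i, (lam i ^ (2*q) * α ^ (1-2*q) / (lam i + α) ^ 2) * (ydCoeff lam xdag e i) ^ 2
        + 2 * ∑' i, (lam i ^ (2*q) * α ^ (1-2*q) / (lam i + α) ^ 2) * (-(e i)) ^ 2 := h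
    _ = _ := by
        congr 1
        congr 1
        exact tsum_congr (fun i => by ring)

end Tri


/-- quadratic triangle inequality, noise vs noisy and exact data. -/
lemma psiHDsq_tri3 {Λ p q μ α : ℝ} {lam e xdag ω : ℕ → ℝ}
    (hlam : ∀ i, 0 < lam i ∧ lam i ≤ Λ) (hα : 0 < α)
    (hsrc : ∀ i, xdag i = lam i ^ μ * ω i) (hω : Summable fun i => ω i ^ 2)
    (hp : 0 ≤ p) (hq1 : p ≤ q) (hq2 : q ≤ p + 1) (hμ0 : 0 ≤ μ) (hqμ : q ≤ 1/2 - μ)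
    (he : Summable fun i => lam i ^ (2*p) * e i ^ 2) :
    psiHDsq lam e q α
      ≤ 2 * psiHDsq lam (ydCoeff lam xdag e) q α + 2 * psiHDsq lam (yCoeff lam xdag) q α := by
  have hq0 : 0 ≤ q := le_trans hp hq1
  have hWy : Summable fun i =>
      (lam i ^ (2*q) * α ^ (1-2*q) / (lam i + α) ^ 2) * (yCoeff lam xdag i) ^ 2 :=
    (summable_psi_y hlam hα hsrc hω hq0 hμ0 hqμ).congr (fun i => by ring)
  have hWe : Summable fun i =>
      (lam i ^ (2*q) * α ^ (1-2*q) / (lam i + α) ^ 2) * e i ^ 2 :=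
    (summable_psi_e hlam hα hp hq1 hq2 he).congr (fun i => by ring)
  have hWyd : Summable fun i =>
      (lam i ^ (2*q) * α ^ (1-2*q) / (lam i + α) ^ 2) * (ydCoeff lam xdag e i) ^ 2 := by
    apply ((hWy.mul_left 2).add (hWe.mul_left 2)).of_nonneg_of_le
      (fun i => mul_nonneg (psiW_nonneg hlam hα i) (sq_nonneg _))
    intro i
    have hW := psiW_nonneg (q := q) hlam hα i
    have : ydCoeff lam xdag e i = yCoeff lam xdag i + e i := rfl
    rw [this]
    nlinarith [mul_nonneg hW (sq_nonneg (yCoeff lam xdag i - e i))]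
  have hWmy : Summable fun i =>
      (lam i ^ (2*q) * α ^ (1-2*q) / (lam i + α) ^ 2) * (-(yCoeff lam xdag i)) ^ 2 :=
    hWy.congr (fun i => by ring)
  rw [psiHDsq_eq, psiHDsq_eq, psiHDsq_eq]
  have h := aux_tsum_quad (psiW_nonneg hlam hα)
    (show ∀ i, ydCoeff lam xdag e i + (-(yCoeff lam xdag i)) = e i from fun i => by
      show Real.sqrt (lam i) * xdag i + e i + (-(Real.sqrt (lam i) * xdag i)) = e i
      ring)
    hWyd hWmy
  calc ∑' i, (lam i ^ (2*q) * α ^ (1-2*q) / (lam i + α) ^ 2) * e i ^ 2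
      ≤ 2 * ∑' i, (lam i ^ (2*q) * α ^ (1-2*q) / (lam i + α) ^ 2) * (ydCoeff lam xdag e i) ^ 2
        + 2 * ∑' i, (lam i ^ (2*q) * α ^ (1-2*q) / (lam i + α) ^ 2) * (-(yCoeff lam xdag i)) ^ 2 := h
    _ = _ := by
        congr 1
        congr 1
        exact tsum_congr (fun i => by ring)


/-- convergence rate for the modified heuristic discrepancy rule. -/
theorem statement7 (Λ p q μ : ℝ) (hΛ : 0 < Λ) (hp : p ∈ Set.Icc (0 : ℝ) (1 / 2))
    (hμ : μ ∈ Set.Icc (0 : ℝ) 1)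
    (hq1 : p ≤ q) (hq2 : q ≤ p + 1) (hq3 : q ≤ 1 / 2 - μ)
    (lam xdag ω : ℕ → ℝ) (hlam : ∀ i, 0 < lam i ∧ lam i ≤ Λ)
    (hsrc : ∀ i, xdag i = lam i ^ μ * ω i) (hω : Summable fun i => ω i ^ 2)
    (hQy : ∃ i, xdag i ≠ 0)
    (CN : ℝ) (hCN : 0 < CN) :
    ∃ C > 0, ∃ η₀ > 0, ∀ e : ℕ → ℝ,
      (Summable fun i => lam i ^ (2 * p) * e i ^ 2) →
      noiseCondC lam e Λ (2 * q) CN →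
      eta lam e p ≤ η₀ →
      ∀ αstar ∈ Set.Ioo (0 : ℝ) Λ,
        (∀ α ∈ Set.Ioo (0 : ℝ) Λ,
          psiHD lam (ydCoeff lam xdag e) q αstar ≤ psiHD lam (ydCoeff lam xdag e) q α) →
        totalErr lam xdag e αstar ≤
          C * eta lam e p ^ ((2 * μ / (2 * μ + 2 * p + 1)) * (2 * μ / (1 - 2 * q))) := by
  obtain ⟨hp0, hp12⟩ := hp
  obtain ⟨hμ0, hμ1⟩ := hμ
  obtain ⟨i₀, hi₀⟩ := hQy
  have hq0 : 0 ≤ q := le_trans hp0 hq1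
  have hq12 : q ≤ 1/2 := by linarith only [hq3, hμ0]
  have hqμ : q ≤ 1/2 - μ := hq3
  have hlpos : ∀ i, 0 < lam i := fun i => (hlam i).1
  -- the single-mode constant
  obtain ⟨c0, hc0, hlowAll⟩ :
      ∃ c : ℝ, 0 < c ∧ ∀ α ∈ Set.Ioo (0:ℝ) Λ,
        c * α ^ (1-2*q) ≤ psiHDsq lam (yCoeff lam xdag) q α := by
    refine ⟨lam i₀ ^ (2*q+1) * xdag i₀ ^ 2 / (4*Λ^2), ?_, ?_⟩
    · have h1 : 0 < lam i₀ ^ (2*q+1) := Real.rpow_pos_of_pos (hlam i₀).1 _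
      have h2 : 0 < xdag i₀ ^ 2 := by positivity
      positivity
    · exact fun α hα => psiHDsq_y_ge hlam hΛ hα hsrc hω hq0 hμ0 hqμ i₀
  obtain ⟨Sω, hSωdef⟩ : ∃ x : ℝ, x = ∑' i, ω i ^ 2 := ⟨_, rfl⟩
  have hSω0 : 0 ≤ Sω := hSωdef ▸ tsum_nonneg fun i => sq_nonneg _
  obtain ⟨K2, hK2def⟩ : ∃ x : ℝ, x = 2*Sω + 2 := ⟨_, rfl⟩
  have hK20 : 0 < K2 := by rw [hK2def]; linarith only [hSω0]
  -- exponents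
  obtain ⟨ρ, hρdef⟩ : ∃ x : ℝ, x = 2 * μ / (2 * μ + 2 * p + 1) := ⟨_, rfl⟩
  obtain ⟨tt, httdef⟩ : ∃ x : ℝ, x = 2 * μ / (1 - 2 * q) := ⟨_, rfl⟩
  obtain ⟨t2, ht2def⟩ : ∃ x : ℝ, x = 2 * μ / (2 + 2 * p - 2 * q) := ⟨_, rfl⟩
  have hm0 : (0:ℝ) < 2*μ+2*p+1 := by linarith only [hμ0, hp0]
  have h12q0 : (0:ℝ) ≤ 1 - 2*q := by linarith only [hq3, hμ0]
  have hρ0 : 0 ≤ ρ := by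
    rw [hρdef]; exact div_nonneg (by linarith only [hμ0]) hm0.le
  have htt0 : 0 ≤ tt := by
    rw [httdef]; exact div_nonneg (by linarith only [hμ0]) h12q0
  have ht20 : 0 ≤ t2 := by
    rw [ht2def]; exact div_nonneg (by linarith only [hμ0]) (by linarith only [hq2])
  have htt1 : tt ≤ 1 := by
    rcases lt_or_eq_of_le (show 2*q ≤ 1 by linarith only [hq12]) with h | h
    · rw [httdef]
      exact (div_le_one (by linarith only [h])).mpr (by linarith only [hq3])
    · rw [httdef, show (1:ℝ) - 2*q = 0 by linarith only [h], div_zero]; norm_num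
  -- branch constants
  obtain ⟨B1, hB1def⟩ : ∃ x : ℝ, x = (4*K2/c0) ^ tt := ⟨_, rfl⟩
  obtain ⟨B2, hB2def⟩ : ∃ x : ℝ, x = (4/c0) ^ t2 := ⟨_, rfl⟩
  have hB10 : 0 ≤ B1 := hB1def ▸ Real.rpow_nonneg (by positivity) _
  have hB20 : 0 ≤ B2 := hB2def ▸ Real.rpow_nonneg (by positivity) _
  obtain ⟨C1, hC1def⟩ : ∃ x : ℝ, x = B1 + B2 + 1 := ⟨_, rfl⟩
  have hC10 : 0 < C1 := by rw [hC1def]; linarith only [hB10, hB20]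
  have hC11 : 1 ≤ C1 := by rw [hC1def]; linarith only [hB10, hB20]
  obtain ⟨Cfin, hCfindef⟩ :
      ∃ x : ℝ, x = 16*(1+CN)*K2 + (16*(1+CN)+2)*Sω*C1 + 1 := ⟨_, rfl⟩
  have hCfin0 : 0 < Cfin := by
    rw [hCfindef]
    have h1 : 0 < 16*(1+CN)*K2 := mul_pos (by linarith only [hCN]) hK20
    have h2 : 0 ≤ (16*(1+CN)+2)*Sω*C1 :=
      mul_nonneg (mul_nonneg (by linarith only [hCN]) hSω0) hC10.le
    linarith only [h1, h2]
  refine ⟨Real.sqrt Cfin, Real.sqrt_pos.mpr hCfin0,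
    min 1 ((Λ/2) ^ ((2*μ+2*p+1)/2)),
    lt_min one_pos (Real.rpow_pos_of_pos (by linarith only [hΛ]) _), ?_⟩
  intro e he hnc hηle αstar hαs hmin
  obtain ⟨hαs0, hαsΛ⟩ := hαs
  obtain ⟨η, hηdef⟩ : ∃ x : ℝ, x = eta lam e p := ⟨_, rfl⟩
  rw [← hηdef] at hηle
  rw [show (2 * μ / (2 * μ + 2 * p + 1)) = ρ from hρdef.symm,
    show (2 * μ / (1 - 2 * q)) = tt from httdef.symm,
    show eta lam e p = η from hηdef.symm]
  have hη0 : 0 ≤ η := hηdef ▸ Real.sqrt_nonneg _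
  have hetaSq0 : 0 ≤ etaSq lam e p := tsum_nonneg fun i =>
    mul_nonneg (Real.rpow_nonneg (hlpos i).le _) (sq_nonneg _)
  have hE : etaSq lam e p = η ^ 2 := by
    rw [hηdef]; exact (Real.sq_sqrt hetaSq0).symm
  -- monotonicity of squares along the minimizer property
  have hmono : ∀ β ∈ Set.Ioo (0:ℝ) Λ,
      psiHDsq lam (ydCoeff lam xdag e) q αstar ≤ psiHDsq lam (ydCoeff lam xdag e) q β := by
    intro β hβ
    have hle := hmin β hβ
    have h1 : psiHDsq lam (ydCoeff lam xdag e) q αstar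
        = (psiHD lam (ydCoeff lam xdag e) q αstar) ^ 2 :=
      (Real.sq_sqrt (psiHDsq_nonneg hlpos hαs0 _)).symm
    have h2 : psiHDsq lam (ydCoeff lam xdag e) q β
        = (psiHD lam (ydCoeff lam xdag e) q β) ^ 2 :=
      (Real.sq_sqrt (psiHDsq_nonneg hlpos hβ.1 _)).symm
    rw [h1, h2]
    exact pow_le_pow_left₀ (Real.sqrt_nonneg _) hle 2
  -- master bound for the squared total error
  have hkey : totalErrSq lam xdag e αstar ≤ Cfin * η ^ (2*(ρ*tt)) := by
    by_cases hηz : η = 0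
    · -- exact data
      have heSqz : etaSq lam e p = 0 := by rw [hE, hηz]; ring
      have hezero : ∀ i, e i = 0 := by
        intro i
        have h1 := Summable.le_tsum he i (fun j _ =>
          mul_nonneg (Real.rpow_nonneg (hlpos j).le _) (sq_nonneg _))
        have h3 : 0 ≤ lam i ^ (2*p) * e i ^ 2 :=
          mul_nonneg (Real.rpow_nonneg (hlpos i).le _) (sq_nonneg _)
        have h4 : lam i ^ (2*p) * e i ^ 2 = 0 := le_antisymm (by
          calc lam i ^ (2*p) * e i ^ 2 ≤ etaSq lam e p := h1
            _ = 0 := heSqz) h3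
        have h5 : (0:ℝ) < lam i ^ (2*p) := Real.rpow_pos_of_pos (hlpos i) _
        have h6 : e i ^ 2 = 0 := (mul_eq_zero.mp h4).resolve_left (ne_of_gt h5)
        exact (pow_eq_zero_iff (two_ne_zero)).mp h6
      have hydy : ydCoeff lam xdag e = yCoeff lam xdag := by
        funext i; simp [ydCoeff, yCoeff, hezero i]
      rcases eq_or_lt_of_le hμ0 with hμz | hμpos
      · -- μ = 0 : everything is bounded by constants
        have hρz : ρ = 0 := by rw [hρdef, ← hμz]; norm_num
        rw [show (2*(ρ*tt) : ℝ) = 0 by rw [hρz]; ring, Real.rpow_zero, mul_one]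
        have hdz : dataErrSq lam e αstar = 0 := by
          have h7 : (fun i => lam i * e i ^ 2 / (lam i + αstar) ^ 2) = fun _ => (0:ℝ) :=
            funext fun i => by rw [hezero i]; ring
          show (∑' i, lam i * e i ^ 2 / (lam i + αstar) ^ 2) = 0
          rw [h7, tsum_zero]
        have happ := approxErrSq_le hlam hαs0 hsrc hω hμ0 hμ1
        rw [← hSωdef] at happ
        have hα1 : αstar ^ (2*μ) = 1 := by
          rw [show (2*μ : ℝ) = 0 by linarith only [hμz], Real.rpow_zero]
        rw [hα1, mul_one] at happ
        have htot := totalErrSq_le hlam hαs0 hq0 hq1 hq12 hsrc hω hμ0 hμ1 he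
        have hge : 2*Sω ≤ Cfin := by
          rw [hCfindef]
          have h8 : 0 < 16*(1+CN)*K2 := mul_pos (by linarith only [hCN]) hK20
          have h9a : 2*Sω ≤ (16*(1+CN)+2)*Sω :=
            mul_le_mul_of_nonneg_right (by linarith only [hCN]) hSω0
          have h9b : 2*Sω*C1 ≤ (16*(1+CN)+2)*Sω*C1 :=
            mul_le_mul_of_nonneg_right h9a hC10.le
          have h9c : 2*Sω ≤ 2*Sω*C1 := by
            calc 2*Sω = 2*Sω*1 := (mul_one _).symm
              _ ≤ 2*Sω*C1 := mul_le_mul_of_nonneg_left hC11 (by linarith only [hSω0])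
          linarith only [h8, h9b, h9c]
        linarith only [htot, hdz, happ, hge]
      · -- μ > 0 : contradiction with the minimizer property
        exfalso
        have hlow := hlowAll αstar ⟨hαs0, hαsΛ⟩
        have hB0 : 0 < c0 * αstar ^ (1-2*q) :=
          mul_pos hc0 (Real.rpow_pos_of_pos hαs0 _)
        obtain ⟨B, hBdef⟩ : ∃ x : ℝ, x = c0 * αstar ^ (1-2*q) := ⟨_, rfl⟩
        rw [← hBdef] at hB0 hlow
        have hr0 : 0 < (B/(2*(Sω+1))) ^ (1/(2*μ)) :=
          Real.rpow_pos_of_pos (by positivity) _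
        obtain ⟨β, hβdef⟩ :
            ∃ x : ℝ, x = min αstar ((B/(2*(Sω+1))) ^ (1/(2*μ))) := ⟨_, rfl⟩
        have hβ0 : 0 < β := hβdef ▸ lt_min hαs0 hr0
        have hβΛ : β < Λ := lt_of_le_of_lt (hβdef ▸ min_le_left _ _) hαsΛ
        have hβμ : β ^ (2*μ) ≤ B/(2*(Sω+1)) := by
          have h1 : β ≤ (B/(2*(Sω+1))) ^ (1/(2*μ)) := hβdef ▸ min_le_right _ _
          have h2 := Real.rpow_le_rpow hβ0.le h1 (by linarith only [hμ0] : (0:ℝ) ≤ 2*μ)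
          rwa [← Real.rpow_mul (by positivity : (0:ℝ) ≤ B/(2*(Sω+1))),
            one_div, inv_mul_cancel₀
              (by linarith only [hμpos] : (0:ℝ) < 2*μ).ne', Real.rpow_one] at h2
        have hup := psiHDsq_y_le hlam hβ0 hsrc hω hq0 hμ0 hqμ
        rw [← hSωdef] at hup
        have hfinal : B ≤ Sω * β ^ (2*μ) := by
          calc B ≤ psiHDsq lam (yCoeff lam xdag) q αstar := hlow
            _ = psiHDsq lam (ydCoeff lam xdag e) q αstar := by rw [hydy]
            _ ≤ psiHDsq lam (ydCoeff lam xdag e) q β := hmono β ⟨hβ0, hβΛ⟩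
            _ = psiHDsq lam (yCoeff lam xdag) q β := by rw [hydy]
            _ ≤ Sω * β ^ (2*μ) := hup
        have h10 : Sω * β ^ (2*μ) ≤ Sω * (B/(2*(Sω+1))) :=
          mul_le_mul_of_nonneg_left hβμ hSω0
        have h11 : B = (B/(2*(Sω+1))) * (2*(Sω+1)) := by field_simp
        obtain ⟨D, hDdef⟩ : ∃ x : ℝ, x = B/(2*(Sω+1)) := ⟨_, rfl⟩
        rw [← hDdef] at h10 h11
        have hD0 : 0 < D := by rw [hDdef]; positivity
        have h12 : D*(2*(Sω+1)) ≤ Sω*D := by linarith only [hfinal, h10, h11]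
        linarith only [h12, hD0, mul_nonneg hSω0 hD0.le]
    · -- positive weak noise level
      have hηpos : 0 < η := lt_of_le_of_ne hη0 (Ne.symm hηz)
      have hη1 : η ≤ 1 := le_trans hηle (min_le_left _ _)
      obtain ⟨αopt, hαoptdef⟩ : ∃ x : ℝ, x = η ^ (2/(2*μ+2*p+1)) := ⟨_, rfl⟩
      have hαopt0 : 0 < αopt := hαoptdef ▸ Real.rpow_pos_of_pos hηpos _
      have hαoptΛ : αopt < Λ := by
        have h1 : η ≤ (Λ/2) ^ ((2*μ+2*p+1)/2) := le_trans hηle (min_le_right _ _)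
        have h2 : αopt ≤ ((Λ/2) ^ ((2*μ+2*p+1)/2)) ^ (2/(2*μ+2*p+1)) := by
          rw [hαoptdef]
          exact Real.rpow_le_rpow hη0 h1 (by positivity)
        rw [← Real.rpow_mul (by linarith only [hΛ] : (0:ℝ) ≤ Λ/2),
          show ((2*μ+2*p+1)/2)*(2/(2*μ+2*p+1)) = 1 by field_simp,
          Real.rpow_one] at h2
        linarith only [h2, hΛ]
      -- power identities
      have hpow1 : αopt ^ (2*μ) = η ^ (2*ρ) := by
        rw [hαoptdef, ← Real.rpow_mul hη0]
        congr 1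
        rw [hρdef]; ring
      have hpow2 : etaSq lam e p * αopt ^ (-(1+2*p)) = η ^ (2*ρ) := by
        rw [hE, hαoptdef, ← Real.rpow_mul hη0, ← Real.rpow_natCast η 2,
          ← Real.rpow_add hηpos]
        congr 1
        rw [hρdef]; push_cast; field_simp [hm0.ne']; ring
      -- upper bound for ψ² at the minimizer
      have hyd_opt := psiHDsq_tri1 hlam hαopt0 hsrc hω hp0 hq1 hq2 hμ0 hqμ he
      have hy_opt := psiHDsq_y_le hlam hαopt0 hsrc hω hq0 hμ0 hqμ
      rw [← hSωdef] at hy_opt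
      have he_opt := psiHDsq_e_le hlam hαopt0 hp0 hq1 hq2 he
      have hub : psiHDsq lam (ydCoeff lam xdag e) q αstar ≤ K2 * η ^ (2*ρ) := by
        calc psiHDsq lam (ydCoeff lam xdag e) q αstar
            ≤ psiHDsq lam (ydCoeff lam xdag e) q αopt := hmono αopt ⟨hαopt0, hαoptΛ⟩
          _ ≤ 2 * psiHDsq lam (yCoeff lam xdag) q αopt + 2 * psiHDsq lam e q αopt := hyd_opt
          _ ≤ 2 * (Sω * αopt ^ (2*μ)) + 2 * (etaSq lam e p * αopt ^ (-(1+2*p))) := by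
              linarith only [hy_opt, he_opt]
          _ = K2 * η ^ (2*ρ) := by rw [hpow1, hpow2, hK2def]; ring
      -- lower bound at the minimizer
      have hlow := hlowAll αstar ⟨hαs0, hαsΛ⟩
      have htri2 := psiHDsq_tri2 hlam hαs0 hsrc hω hp0 hq1 hq2 hμ0 hqμ he
      have he_star := psiHDsq_e_le hlam hαs0 hp0 hq1 hq2 he
      have hlow2 : c0 * αstar ^ (1-2*q)
          ≤ 2*(K2 * η ^ (2*ρ)) + 2*(etaSq lam e p * αstar ^ (-(1+2*p))) := by
        calc c0 * αstar ^ (1-2*q) ≤ psiHDsq lam (yCoeff lam xdag) q αstar := hlow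
          _ ≤ 2 * psiHDsq lam (ydCoeff lam xdag e) q αstar
              + 2 * psiHDsq lam e q αstar := htri2
          _ ≤ 2*(K2 * η ^ (2*ρ)) + 2*(etaSq lam e p * αstar ^ (-(1+2*p))) := by
              linarith only [hub, he_star]
      -- the bound on αstar^{2μ}
      have hstar : αstar ^ (2*μ) ≤ C1 * η ^ (2*(ρ*tt)) := by
        rcases eq_or_lt_of_le hμ0 with hμz | hμpos
        · have hρz : ρ = 0 := by rw [hρdef, ← hμz]; norm_num
          rw [show (2*μ : ℝ) = 0 by linarith only [hμz], Real.rpow_zero,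
            show (2*(ρ*tt) : ℝ) = 0 by rw [hρz]; ring, Real.rpow_zero, mul_one]
          exact hC11
        · have h12q : (0:ℝ) < 1-2*q := by linarith only [hq3, hμpos]
          have h2pq : (0:ℝ) < 2+2*p-2*q := by linarith only [h12q, hp0]
          have hsplit : c0 * αstar ^ (1-2*q) ≤ 4*K2*η^(2*ρ)
              ∨ c0 * αstar ^ (1-2*q) ≤ 4*(etaSq lam e p * αstar ^ (-(1+2*p))) := by
            by_contra hcon
            push_neg at hcon
            obtain ⟨hc1, hc2⟩ := hcon
            linarith only [hlow2, hc1, hc2]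
          have hαsnn : 0 ≤ αstar ^ (1-2*q) := Real.rpow_nonneg hαs0.le _
          have hηθnn : 0 ≤ η ^ (2*(ρ*tt)) := Real.rpow_nonneg hη0 _
          rcases hsplit with hbr | hbr
          · -- branch from the noise-free part
            have h1 : αstar ^ (1-2*q) ≤ (4*K2/c0) * η ^ (2*ρ) := by
              calc αstar ^ (1-2*q) ≤ 4*K2*η^(2*ρ)/c0 := by
                    rw [le_div_iff₀ hc0]; linarith only [hbr]
                _ = (4*K2/c0) * η ^ (2*ρ) := by ring
            have h2 : αstar ^ (2*μ) = (αstar ^ (1-2*q)) ^ tt := by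
              rw [← Real.rpow_mul hαs0.le]
              congr 1
              rw [httdef]; field_simp
            rw [h2]
            have h3 : (αstar ^ (1-2*q)) ^ tt ≤ ((4*K2/c0) * η ^ (2*ρ)) ^ tt :=
              Real.rpow_le_rpow hαsnn h1 htt0
            have h4 : ((4*K2/c0) * η ^ (2*ρ)) ^ tt = B1 * η ^ (2*(ρ*tt)) := by
              rw [Real.mul_rpow (by positivity) (Real.rpow_nonneg hη0 _),
                ← Real.rpow_mul hη0, hB1def, show (2*ρ)*tt = 2*(ρ*tt) by ring]
            calc (αstar ^ (1-2*q)) ^ tt ≤ ((4*K2/c0) * η ^ (2*ρ)) ^ tt := h3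
              _ = B1 * η ^ (2*(ρ*tt)) := h4
              _ ≤ C1 * η ^ (2*(ρ*tt)) := by
                  apply mul_le_mul_of_nonneg_right _ hηθnn
                  rw [hC1def]; linarith only [hB20]
          · -- branch from the noise part
            have hstar2 : αstar ^ (2+2*p-2*q) ≤ 4*(etaSq lam e p)/c0 := by
              have h5 := mul_le_mul_of_nonneg_right hbr
                (Real.rpow_nonneg hαs0.le (1+2*p))
              have h6 : αstar^(1-2*q) * αstar^(1+2*p) = αstar^(2+2*p-2*q) := by
                rw [← Real.rpow_add hαs0]; congr 1; ring
              have h7 : αstar^(-(1+2*p)) * αstar^(1+2*p) = 1 := by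
                rw [← Real.rpow_add hαs0, show -(1+2*p)+(1+2*p) = 0 by ring,
                  Real.rpow_zero]
              rw [le_div_iff₀ hc0]
              calc αstar ^ (2+2*p-2*q) * c0
                  = c0 * αstar^(1-2*q) * αstar^(1+2*p) := by rw [← h6]; ring
                _ ≤ 4*(etaSq lam e p * αstar ^ (-(1+2*p))) * αstar^(1+2*p) := h5
                _ = 4*(etaSq lam e p) * (αstar^(-(1+2*p)) * αstar^(1+2*p)) := by ring
                _ = 4*(etaSq lam e p) := by rw [h7, mul_one]
            have h2 : αstar ^ (2*μ) = (αstar ^ (2+2*p-2*q)) ^ t2 := by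
              rw [← Real.rpow_mul hαs0.le]
              congr 1
              rw [ht2def]; field_simp
              rw [div_self (by linarith only [h2pq])]
            rw [h2]
            have h3 : (αstar ^ (2+2*p-2*q)) ^ t2 ≤ (4*(etaSq lam e p)/c0) ^ t2 :=
              Real.rpow_le_rpow (Real.rpow_nonneg hαs0.le _) hstar2 ht20
            have h4 : (4*(etaSq lam e p)/c0) ^ t2 = B2 * η ^ (2*t2) := by
              rw [hE, ← Real.rpow_natCast η 2,
                show 4*(η ^ (((2:ℕ)):ℝ))/c0 = (4/c0) * η ^ (((2:ℕ)):ℝ) by ring,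
                Real.mul_rpow (by positivity) (Real.rpow_nonneg hη0 _),
                ← Real.rpow_mul hη0, hB2def]
              norm_num
            have hθt2 : ρ * tt ≤ t2 := by
              have key : (2*μ)*(2+2*p-2*q) ≤ (2*μ+2*p+1)*(1-2*q) := by
                linarith only [mul_nonneg (show (0:ℝ) ≤ 1+2*p by linarith only [hp0])
                  (show (0:ℝ) ≤ 1-2*q-2*μ by linarith only [hq3])]
              rw [hρdef, httdef, ht2def, div_mul_div_comm,
                div_le_div_iff₀ (mul_pos hm0 h12q) h2pq]
              linarith only [mul_le_mul_of_nonneg_left key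
                (by linarith only [hμpos] : (0:ℝ) ≤ 2*μ)]
            have h5 : η ^ (2*t2) ≤ η ^ (2*(ρ*tt)) :=
              Real.rpow_le_rpow_of_exponent_ge hηpos hη1 (by linarith only [hθt2])
            calc (αstar ^ (2+2*p-2*q)) ^ t2 ≤ (4*(etaSq lam e p)/c0) ^ t2 := h3
              _ = B2 * η ^ (2*t2) := h4
              _ ≤ B2 * η ^ (2*(ρ*tt)) := mul_le_mul_of_nonneg_left h5 hB20
              _ ≤ C1 * η ^ (2*(ρ*tt)) := by
                  apply mul_le_mul_of_nonneg_right _ hηθnn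
                  rw [hC1def]; linarith only [hB10]
      -- assemble everything
      have htot := totalErrSq_le hlam hαs0 hq0 hq1 hq12 hsrc hω hμ0 hμ1 he
      have hdata := dataErrSq_le hlam ⟨hαs0, hαsΛ⟩ hp0 hq1 hq2 hq12 he hnc hCN
      have htri3 := psiHDsq_tri3 hlam hαs0 hsrc hω hp0 hq1 hq2 hμ0 hqμ he
      have hy_star := psiHDsq_y_le hlam hαs0 hsrc hω hq0 hμ0 hqμ
      rw [← hSωdef] at hy_star
      have happ := approxErrSq_le hlam hαs0 hsrc hω hμ0 hμ1
      rw [← hSωdef] at happ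
      have hρθ : η ^ (2*ρ) ≤ η ^ (2*(ρ*tt)) := by
        apply Real.rpow_le_rpow_of_exponent_ge hηpos hη1
        linarith only [mul_le_mul_of_nonneg_left htt1 hρ0]
      have hpsiE : psiHDsq lam e q αstar
          ≤ 2*(K2 * η ^ (2*ρ)) + 2*(Sω * αstar ^ (2*μ)) := by
        calc psiHDsq lam e q αstar
            ≤ 2 * psiHDsq lam (ydCoeff lam xdag e) q αstar
              + 2 * psiHDsq lam (yCoeff lam xdag) q αstar := htri3
          _ ≤ 2*(K2 * η ^ (2*ρ)) + 2*(Sω * αstar ^ (2*μ)) := by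
              linarith only [hub, hy_star]
      have hCNnn : (0:ℝ) ≤ 4*(1+CN) := by linarith only [hCN]
      calc totalErrSq lam xdag e αstar
          ≤ 2 * dataErrSq lam e αstar + 2 * approxErrSq lam xdag αstar := htot
        _ ≤ 2*(4*(1+CN) * psiHDsq lam e q αstar) + 2*(Sω * αstar ^ (2*μ)) := by
            linarith only [hdata, happ]
        _ ≤ 2*(4*(1+CN) * (2*(K2 * η ^ (2*ρ)) + 2*(Sω * αstar ^ (2*μ))))
              + 2*(Sω * αstar ^ (2*μ)) := by
            have h20 := mul_le_mul_of_nonneg_left hpsiE hCNnn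
            linarith only [h20]
        _ = 16*(1+CN)*K2 * η ^ (2*ρ) + (16*(1+CN)+2) * (Sω * αstar ^ (2*μ)) := by
            ring
        _ ≤ 16*(1+CN)*K2 * η ^ (2*(ρ*tt))
              + (16*(1+CN)+2) * (Sω * (C1 * η ^ (2*(ρ*tt)))) := by
            have e1 : 16*(1+CN)*K2 * η ^ (2*ρ) ≤ 16*(1+CN)*K2 * η ^ (2*(ρ*tt)) :=
              mul_le_mul_of_nonneg_left hρθ
                (mul_nonneg (by linarith only [hCN]) hK20.le)
            have e2 : Sω * αstar ^ (2*μ) ≤ Sω * (C1 * η ^ (2*(ρ*tt))) :=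
              mul_le_mul_of_nonneg_left hstar hSω0
            have e3 := mul_le_mul_of_nonneg_left e2
              (show (0:ℝ) ≤ 16*(1+CN)+2 by linarith only [hCN])
            linarith only [e1, e3]
        _ ≤ Cfin * η ^ (2*(ρ*tt)) := by
            rw [hCfindef]
            have h21 : 0 ≤ η ^ (2*(ρ*tt)) := Real.rpow_nonneg hη0 _
            linarith only [h21]
  -- conclude by taking square roots
  have hsq : Real.sqrt (η ^ (2*(ρ*tt))) = η ^ (ρ*tt) := by
    rw [show (2*(ρ*tt) : ℝ) = (ρ*tt)*2 by ring, Real.rpow_mul hη0,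
      show ((2:ℝ)) = (((2:ℕ)):ℝ) by norm_num, Real.rpow_natCast]
    exact Real.sqrt_sq (Real.rpow_nonneg hη0 _)
  calc totalErr lam xdag e αstar
      = Real.sqrt (totalErrSq lam xdag e αstar) := rfl
    _ ≤ Real.sqrt (Cfin * η ^ (2*(ρ*tt))) := Real.sqrt_le_sqrt hkey
    _ = Real.sqrt Cfin * Real.sqrt (η ^ (2*(ρ*tt))) := Real.sqrt_mul hCfin0.le _
    _ = Real.sqrt Cfin * η ^ (ρ*tt) := by rw [hsq]

end WeakNoise
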